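/- arXiv:2506.08910 — 3 statements merged into one kernel-verified Lean document; each statement's English description precedes it below -/
import Mathlib

section
/- If P and Q are polynomials (viewed as differential operators) such that P(d/dx) x^N = p(x) and Q(d/dx) x^N = q(x), where p and q are monic of degree N, then (p ⊞_N q)(x) = P(d/dx) Q(d/dx) x^N. -/
open Polynomial Finset

/-- Normalized repeated derivative `∂_{k|N} p = ((N-k)!/N!) p^{(N-k)}`. -/
noncomputable def dOp (N k : ℕ) (p : Polynomial ℝ) : Polynomial ℝ :=
  C ((Nat.factorial (N - k) : ℝ) / (Nat.factorial N : ℝ)) * (derivative^[N - k] p)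

/-- Dilation of a degree-`d` polynomial: `(𝒟_a p)(x) = a^d p(x/a)`. -/
noncomputable def dil (d : ℕ) (a : ℝ) (p : Polynomial ℝ) : Polynomial ℝ :=
  C (a ^ d) * p.comp (C a⁻¹ * X)

/-- Probabilists' Hermite polynomial. -/
noncomputable def hermiteP (k : ℕ) : Polynomial ℝ :=
  ∑ j ∈ Finset.range (k / 2 + 1),
    C ((Nat.factorial k : ℝ) * (-1) ^ j /
        ((Nat.factorial j : ℝ) * (Nat.factorial (k - 2 * j)) * 2 ^ j)) * X ^ (k - 2 * j)

/-- The signed coefficients `a_k = (-1)^k coeff_{N-k}(p)` of a monic degree-`N` polynomial. -/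
noncomputable def coeffSeq (N : ℕ) (p : Polynomial ℝ) (k : ℕ) : ℝ :=
  (-1 : ℝ) ^ k * p.coeff (N - k)

/-- `κ : ℕ → ℝ` is the sequence of finite free cumulants associated to the signed
coefficient sequence `a` of a monic degree-`N` polynomial. -/
noncomputable def cumulantRel (N : ℕ) (a κ : ℕ → ℝ) : Prop :=
  ∀ k, 1 ≤ k → k ≤ N →
    a k = ((Nat.descFactorial N k : ℝ) / ((N : ℝ) ^ k * (Nat.factorial k : ℝ))) *
      ∑ π : Finpartition (Finset.univ : Finset (Fin k)),
        (-1 : ℝ) ^ (k - π.parts.card) * (N : ℝ) ^ π.parts.card *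
          ∏ V ∈ π.parts, ((Nat.factorial (V.card - 1) : ℝ) * κ V.card)

/-- Finite free additive convolution `p ⊞_N q`. -/
noncomputable def ffconv (N : ℕ) (p q : Polynomial ℝ) : Polynomial ℝ :=
  X ^ N + ∑ k ∈ Finset.Icc 1 N,
    C ((-1 : ℝ) ^ k *
      ∑ ij ∈ Finset.HasAntidiagonal.antidiagonal k,
        ((Nat.factorial (N - ij.1) : ℝ) * (Nat.factorial (N - ij.2) : ℝ) /
            ((Nat.factorial N : ℝ) * (Nat.factorial (N - k) : ℝ))) *
          coeffSeq N p ij.1 * coeffSeq N q ij.2) * X ^ (N - k)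

/-- `j`-th moment of the empirical root distribution of `p`. -/
noncomputable def momentP (j : ℕ) (p : Polynomial ℝ) : ℝ :=
  (1 / (p.natDegree : ℝ)) * (p.roots.map (fun r => r ^ j)).sum

/-- Apply the differential operator `P(d/dx)` to the polynomial `r`. -/
noncomputable def applyDiffOp (P r : Polynomial ℝ) : Polynomial ℝ :=
  ∑ i ∈ Finset.range (P.natDegree + 1), C (P.coeff i) * derivative^[i] r

lemma applyDiffOp_eq_aeval (P r : Polynomial ℝ) :
    applyDiffOp P r =
      (Polynomial.aeval (Polynomial.derivative : Module.End ℝ (Polynomial ℝ)) P) r := by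
  rw [Polynomial.aeval_eq_sum_range' (Nat.lt_succ_self P.natDegree)]
  unfold applyDiffOp
  rw [LinearMap.sum_apply]
  refine Finset.sum_congr rfl fun i _ => ?_
  rw [LinearMap.smul_apply, Module.End.pow_apply, Polynomial.smul_eq_C_mul]

lemma applyDiffOp_applyDiffOp (P Q r : Polynomial ℝ) :
    applyDiffOp P (applyDiffOp Q r) = applyDiffOp (P * Q) r := by
  rw [applyDiffOp_eq_aeval, applyDiffOp_eq_aeval, applyDiffOp_eq_aeval, map_mul]
  rfl

lemma applyDiffOp_X_pow (N : ℕ) (R : Polynomial ℝ) :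
    applyDiffOp R (X ^ N) =
      ∑ k ∈ Finset.range (N + 1),
        C (R.coeff k * (N.descFactorial k : ℝ)) * X ^ (N - k) := by
  unfold applyDiffOp
  rw [Finset.sum_subset (Finset.range_subset_range.2
      (le_max_left (R.natDegree + 1) (N + 1)) :
      Finset.range (R.natDegree + 1) ⊆ Finset.range (max (R.natDegree + 1) (N + 1)))
      (fun i _ hi => by
        rw [Finset.mem_range, not_lt] at hi
        rw [R.coeff_eq_zero_of_natDegree_lt (by omega), map_zero, zero_mul])]
  rw [Finset.sum_subset (Finset.range_subset_range.2
      (le_max_right (R.natDegree + 1) (N + 1)) :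
      Finset.range (N + 1) ⊆ Finset.range (max (R.natDegree + 1) (N + 1)))
      (fun i _ hi => by
        rw [Finset.mem_range, not_lt] at hi
        rw [Nat.descFactorial_eq_zero_iff_lt.2 (by omega)]
        simp)]
  refine Finset.sum_congr rfl fun i _ => ?_
  rw [Polynomial.iterate_derivative_X_pow_eq_C_mul, map_mul, mul_assoc]

lemma coeff_sum_pow (N m : ℕ) (hm : m ≤ N) (c : ℕ → ℝ) :
    (∑ k ∈ Finset.range (N + 1), C (c k) * X ^ (N - k)).coeff (N - m) = c m := by
  rw [Polynomial.finset_sum_coeff]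
  rw [Finset.sum_eq_single m]
  · simp
  · intro k hk hkm
    rw [Finset.mem_range] at hk
    rw [Polynomial.coeff_C_mul, Polynomial.coeff_X_pow, if_neg (by omega), mul_zero]
  · intro h
    exact absurd (Finset.mem_range.2 (by omega)) h

/-- if `P(d/dx) x^N = p` and `Q(d/dx) x^N = q`, then
`(p ⊞_N q)(x) = P(d/dx) Q(d/dx) x^N`. -/
theorem ffconv_diffOp (N : ℕ) (p q P Q : Polynomial ℝ)
    (hp : p.Monic) (hq : q.Monic) (hpd : p.natDegree = N) (hqd : q.natDegree = N)
    (hP0 : P.coeff 0 = 1) (hQ0 : Q.coeff 0 = 1)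
    (hP : applyDiffOp P (X ^ N) = p) (hQ : applyDiffOp Q (X ^ N) = q) :
    ffconv N p q = applyDiffOp P (applyDiffOp Q (X ^ N)) := by
  have hpc : ∀ i, i ≤ N → p.coeff (N - i) = P.coeff i * (N.descFactorial i : ℝ) := by
    intro i hi; rw [← hP, applyDiffOp_X_pow, coeff_sum_pow N i hi]
  have hqc : ∀ i, i ≤ N → q.coeff (N - i) = Q.coeff i * (N.descFactorial i : ℝ) := by
    intro i hi; rw [← hQ, applyDiffOp_X_pow, coeff_sum_pow N i hi]
  rw [applyDiffOp_applyDiffOp, applyDiffOp_X_pow, Finset.sum_range_succ']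
  unfold ffconv
  rw [add_comm (X ^ N : Polynomial ℝ)]
  congr 1
  · rw [← Finset.Ico_add_one_right_eq_Icc, Finset.sum_Ico_eq_sum_range]
    simp only [Nat.add_sub_cancel, Nat.succ_sub_one]
    refine Finset.sum_congr rfl fun i hi => ?_
    rw [Finset.mem_range] at hi
    set k := 1 + i with hk
    have hk2 : i + 1 = k := by omega
    rw [hk2]
    have hkN : k ≤ N := by omega
    congr 1
    rw [Polynomial.coeff_mul, Finset.mul_sum, Finset.sum_mul]
    congr 1
    refine Finset.sum_congr rfl fun ij hij => ?_
    obtain ⟨a, b⟩ := ij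
    rw [Finset.HasAntidiagonal.mem_antidiagonal] at hij
    simp only at hij ⊢
    have haN : a ≤ N := by omega
    have hbN : b ≤ N := by omega
    unfold coeffSeq
    rw [hpc a haN, hqc b hbN]
    have h1 : ((N - a).factorial : ℝ) * (N.descFactorial a : ℝ) = (N.factorial : ℝ) := by
      rw [← Nat.cast_mul, Nat.factorial_mul_descFactorial haN]
    have h2 : ((N - b).factorial : ℝ) * (N.descFactorial b : ℝ) = (N.factorial : ℝ) := by
      rw [← Nat.cast_mul, Nat.factorial_mul_descFactorial hbN]
    have h3 : ((N - k).factorial : ℝ) * (N.descFactorial k : ℝ) = (N.factorial : ℝ) := by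
      rw [← Nat.cast_mul, Nat.factorial_mul_descFactorial hkN]
    have hsign : ((-1 : ℝ)) ^ k = (-1 : ℝ) ^ a * (-1 : ℝ) ^ b := by
      rw [← pow_add, hij]
    have hfN : (N.factorial : ℝ) ≠ 0 := Nat.cast_ne_zero.2 (Nat.factorial_ne_zero N)
    have hfk : ((N - k).factorial : ℝ) ≠ 0 := Nat.cast_ne_zero.2 (Nat.factorial_ne_zero _)
    have hfa : ((N - a).factorial : ℝ) ≠ 0 := Nat.cast_ne_zero.2 (Nat.factorial_ne_zero _)
    have hfb : ((N - b).factorial : ℝ) ≠ 0 := Nat.cast_ne_zero.2 (Nat.factorial_ne_zero _)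
    rw [hsign]
    have s1 : ((-1 : ℝ)) ^ a * (-1 : ℝ) ^ a = 1 := by
      rw [← pow_add, Even.neg_one_pow ⟨a, rfl⟩]
    have s2 : ((-1 : ℝ)) ^ b * (-1 : ℝ) ^ b = 1 := by
      rw [← pow_add, Even.neg_one_pow ⟨b, rfl⟩]
    field_simp
    linear_combination ((-1:ℝ)^b * (-1:ℝ)^b * ((N-a).factorial : ℝ) * ((N-b).factorial : ℝ) * P.coeff a * (N.descFactorial a : ℝ) * Q.coeff b * (N.descFactorial b : ℝ)) * s1 + (((N-a).factorial : ℝ) * ((N-b).factorial : ℝ) * P.coeff a * (N.descFactorial a : ℝ) * Q.coeff b * (N.descFactorial b : ℝ)) * s2 + (((N-b).factorial : ℝ) * (N.descFactorial b : ℝ) * P.coeff a * Q.coeff b) * h1 + ((N.factorial : ℝ) * P.coeff a * Q.coeff b) * h2 - ((N.factorial : ℝ) * P.coeff a * Q.coeff b) * h3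
  · have h0 : (P * Q).coeff 0 * ((N.descFactorial 0 : ℕ) : ℝ) = 1 := by
      simp [Polynomial.mul_coeff_zero, hP0, hQ0]
    rw [h0]
    simp
end

section
/- Finite free cumulants are additive under finite free convolution: for monic degree-N polynomials p and q, κ_j^N(p ⊞_N q) = κ_j^N(p) + κ_j^N(q) for all 1 ≤ j ≤ N. -/
open Polynomial Finset

variable {α : Type*} [DecidableEq α] {β : Type*} [DecidableEq β]

/-- The set of partition-part-sets of `s`. -/
noncomputable def partsSet (s : Finset α) : Finset (Finset (Finset α)) :=
  Finset.univ.image (Finpartition.parts : Finpartition s → Finset (Finset α))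

lemma mem_partsSet {s : Finset α} {A : Finset (Finset α)} :
    A ∈ partsSet s ↔ A.SupIndep id ∧ A.sup id = s ∧ ⊥ ∉ A := by
  constructor
  · rintro hA
    obtain ⟨π, -, rfl⟩ := Finset.mem_image.1 hA
    exact ⟨π.supIndep, π.sup_parts, π.bot_notMem⟩
  · rintro ⟨h1, h2, h3⟩
    exact Finset.mem_image.2 ⟨⟨A, h1, h2, h3⟩, Finset.mem_univ _, rfl⟩

lemma sum_finpartition_eq (s : Finset α) (w : Finset (Finset α) → ℝ) :
    ∑ π : Finpartition s, w π.parts = ∑ A ∈ partsSet s, w A := by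
  rw [partsSet, Finset.sum_image]
  intro P _ Q _ h
  exact Finpartition.ext h

noncomputable def pW (f : ℕ → ℝ) (A : Finset (Finset α)) : ℝ := ∏ V ∈ A, f V.card

noncomputable def US (f : ℕ → ℝ) (s : Finset α) : ℝ := ∑ A ∈ partsSet s, pW f A

lemma map_preimage_of_subset (g : α ↪ β) {V : Finset β} {s : Finset α} (h : V ⊆ s.map g) :
    (V.preimage g g.injective.injOn).map g = V := by
  ext b
  simp only [Finset.mem_map, Finset.mem_preimage]
  constructor
  · rintro ⟨a, h1, rfl⟩; exact h1
  · intro hb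
    obtain ⟨a, -, rfl⟩ := Finset.mem_map.1 (h hb)
    exact ⟨a, hb, rfl⟩

lemma sup_image_map (g : α ↪ β) (A : Finset (Finset α)) :
    (A.image (fun V => V.map g)).sup id = (A.sup id).map g := by
  rw [Finset.sup_image]
  rw [Finset.comp_sup_eq_sup_comp (Finset.map g) (fun x y => Finset.map_union x y) rfl]
  rfl

lemma US_map (f : ℕ → ℝ) (g : α ↪ β) (s : Finset α) :
    US f (s.map g) = US f s := by
  classical
  unfold US
  refine (Finset.sum_nbij' (i := fun A => A.image (fun V => V.map g))
    (j := fun B => B.image (fun V => V.preimage g g.injective.injOn)) ?_ ?_ ?_ ?_ ?_).symm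
  · -- forward membership
    intro A hA
    obtain ⟨h1, h2, h3⟩ := mem_partsSet.1 hA
    refine mem_partsSet.2 ⟨?_, ?_, ?_⟩
    · rw [Finset.supIndep_iff_pairwiseDisjoint] at h1 ⊢
      rintro V hV W hW hne
      simp only [Finset.coe_image, Set.mem_image, Finset.mem_coe] at hV hW
      obtain ⟨V', hV', rfl⟩ := hV
      obtain ⟨W', hW', rfl⟩ := hW
      have hne' : V' ≠ W' := fun h => hne (by rw [h])
      have := h1 hV' hW' hne'
      exact (Finset.disjoint_map g).2 this
    · rw [sup_image_map, h2]
    · intro hbot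
      obtain ⟨V, hV, hVe⟩ := Finset.mem_image.1 hbot
      rw [Finset.bot_eq_empty, Finset.map_eq_empty] at hVe
      exact h3 (by rwa [hVe] at hV)
  · -- backward membership
    intro B hB
    obtain ⟨h1, h2, h3⟩ := mem_partsSet.1 hB
    have hsub : ∀ V ∈ B, V ⊆ s.map g := fun V hV => h2 ▸ Finset.le_sup (f := id) hV
    have hmp : ∀ V ∈ B, (V.preimage g g.injective.injOn).map g = V :=
      fun V hV => map_preimage_of_subset g (hsub V hV)
    refine mem_partsSet.2 ⟨?_, ?_, ?_⟩
    · rw [Finset.supIndep_iff_pairwiseDisjoint] at h1 ⊢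
      rintro V hV W hW hne
      simp only [Finset.coe_image, Set.mem_image, Finset.mem_coe] at hV hW
      obtain ⟨V', hV', rfl⟩ := hV
      obtain ⟨W', hW', rfl⟩ := hW
      have hne' : V' ≠ W' := fun h => hne (by rw [h])
      have := h1 hV' hW' hne'
      simp only [Function.onFun, id] at this ⊢
      rw [Finset.disjoint_left] at this ⊢
      intro a ha ha'
      exact this (Finset.mem_preimage.1 ha) (Finset.mem_preimage.1 ha')
    · have h4 : (B.image (fun V => V.preimage g g.injective.injOn)).image
          (fun V => V.map g) = B := by
        rw [Finset.image_image]
        exact (Finset.image_congr (fun V hV => hmp V hV)).trans B.image_id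
      apply Finset.map_injective g
      rw [← sup_image_map g, h4, h2]
    · intro hbot
      obtain ⟨V, hV, hVe⟩ := Finset.mem_image.1 hbot
      have := hmp V hV
      rw [hVe] at this
      simp only [Finset.bot_eq_empty, Finset.map_empty] at this
      exact h3 (by rw [Finset.bot_eq_empty, this]; exact hV)
  · intro A hA
    rw [Finset.image_image]
    exact (Finset.image_congr (fun V hV => Finset.preimage_map g V)).trans A.image_id
  · intro B hB
    obtain ⟨h1, h2, h3⟩ := mem_partsSet.1 hB
    have hsub : ∀ V ∈ B, V ⊆ s.map g := fun V hV => h2 ▸ Finset.le_sup (f := id) hV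
    rw [Finset.image_image]
    exact (Finset.image_congr (fun V hV => map_preimage_of_subset g (hsub V hV))).trans
      B.image_id
  · intro A hA
    unfold pW
    rw [Finset.prod_image (fun V _ W _ h => Finset.map_injective g h)]
    exact Finset.prod_congr rfl (fun V _ => by rw [Finset.card_map])

noncomputable def TT (f : ℕ → ℝ) (k : ℕ) : ℝ := US f (Finset.univ : Finset (Fin k))

lemma US_eq_TT (f : ℕ → ℝ) (s : Finset α) : US f s = TT f s.card := by
  classical
  let e : Fin s.card ↪ α :=
    (s.equivFin.symm.toEmbedding).trans (Function.Embedding.subtype _)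
  have he : (Finset.univ : Finset (Fin s.card)).map e = s := by
    ext x
    simp only [Finset.mem_map, Finset.mem_univ, true_and]
    constructor
    · rintro ⟨i, rfl⟩
      exact (s.equivFin.symm i).2
    · intro hx
      exact ⟨s.equivFin ⟨x, hx⟩, by simp [e]⟩
  rw [TT]
  conv_lhs => rw [← he]
  exact US_map f e Finset.univ

lemma partsSet_empty : partsSet (∅ : Finset α) = {∅} := by
  ext A
  rw [mem_partsSet, Finset.mem_singleton]
  constructor
  · rintro ⟨h1, h2, h3⟩
    ext V
    simp only [Finset.notMem_empty, iff_false]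
    intro hV
    have hle : V ⊆ ∅ := h2 ▸ Finset.le_sup (f := id) hV
    have : V = ∅ := Finset.subset_empty.1 hle
    exact h3 (by rw [Finset.bot_eq_empty, ← this]; exact hV)
  · rintro rfl
    exact ⟨Finset.supIndep_empty _, Finset.sup_empty, Finset.notMem_empty _⟩

lemma TT_zero (f : ℕ → ℝ) : TT f 0 = 1 := by
  have : (Finset.univ : Finset (Fin 0)) = ∅ := rfl
  rw [TT, US, this, partsSet_empty, Finset.sum_singleton, pW, Finset.prod_empty]

lemma US_split (f g : ℕ → ℝ) (s : Finset α) :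
    (∑ A ∈ partsSet s, ∏ V ∈ A, (f V.card + g V.card)) =
    ∑ I ∈ s.powerset, US f I * US g (s \ I) := by
  classical
  have lhs : ∀ A ∈ partsSet s, (∏ V ∈ A, (f V.card + g V.card)) =
      ∑ S ∈ A.powerset, (∏ V ∈ S, f V.card) * ∏ V ∈ A \ S, g V.card :=
    fun A _ => Finset.prod_add _ _ _
  rw [Finset.sum_congr rfl lhs, Finset.sum_sigma']
  have rhs : ∀ I ∈ s.powerset, US f I * US g (s \ I)
      = ∑ P ∈ (partsSet I) ×ˢ (partsSet (s \ I)), pW f P.1 * pW g P.2 := by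
    intro I _
    rw [US, US, Finset.sum_mul_sum, Finset.sum_product]
  rw [Finset.sum_congr rfl rhs, Finset.sum_sigma']
  refine Finset.sum_nbij' (i := fun x => ⟨Finset.sup x.2 id, (x.2, x.1 \ x.2)⟩)
    (j := fun y => ⟨y.2.1 ∪ y.2.2, y.2.1⟩) ?_ ?_ ?_ ?_ ?_
  · rintro ⟨A, S⟩ hx
    rw [Finset.mem_sigma, Finset.mem_powerset] at hx
    obtain ⟨hA, hS⟩ := hx
    obtain ⟨h1, h2, h3⟩ := mem_partsSet.1 hA
    have hpd := Finset.supIndep_iff_pairwiseDisjoint.1 h1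
    have hdisj : Disjoint (S.sup id) ((A \ S).sup id) := by
      rw [Finset.disjoint_sup_left]
      intro V hV
      rw [Finset.disjoint_sup_right]
      intro W hW
      have hWA := Finset.mem_sdiff.1 hW
      exact hpd (hS hV) hWA.1 (fun h => hWA.2 (h ▸ hV))
    have hsum : S.sup id ⊔ (A \ S).sup id = s := by
      rw [← Finset.sup_union, Finset.union_sdiff_of_subset hS, h2]
    have hrest : (A \ S).sup id = s \ S.sup id := by
      rw [← hsum, Finset.sup_eq_union, Finset.union_sdiff_cancel_left hdisj]
    rw [Finset.mem_sigma, Finset.mem_powerset, Finset.mem_product]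
    refine ⟨?_, ?_, ?_⟩
    · exact le_of_le_of_eq (Finset.sup_mono hS) h2
    · exact mem_partsSet.2 ⟨h1.subset hS, rfl, fun hb => h3 (hS hb)⟩
    · exact mem_partsSet.2 ⟨h1.subset Finset.sdiff_subset, hrest,
        fun hb => h3 (Finset.sdiff_subset hb)⟩
  · rintro ⟨I, A1, A2⟩ hy
    rw [Finset.mem_sigma, Finset.mem_powerset, Finset.mem_product] at hy
    obtain ⟨hI, hA1, hA2⟩ := hy
    obtain ⟨g1, g2, g3⟩ := mem_partsSet.1 hA1
    obtain ⟨k1, k2, k3⟩ := mem_partsSet.1 hA2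
    rw [Finset.mem_sigma, Finset.mem_powerset]
    constructor
    · refine mem_partsSet.2 ⟨?_, ?_, ?_⟩
      · rw [Finset.supIndep_iff_pairwiseDisjoint]
        rintro V hV W hW hne
        rw [Finset.mem_coe, Finset.mem_union] at hV hW
        have g1' := Finset.supIndep_iff_pairwiseDisjoint.1 g1
        have k1' := Finset.supIndep_iff_pairwiseDisjoint.1 k1
        rcases hV with hV | hV <;> rcases hW with hW | hW
        · exact g1' hV hW hne
        · exact Disjoint.mono (g2 ▸ Finset.le_sup (f := id) hV)
            (k2 ▸ Finset.le_sup (f := id) hW) Finset.disjoint_sdiff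
        · exact (Disjoint.mono (g2 ▸ Finset.le_sup (f := id) hW)
            (k2 ▸ Finset.le_sup (f := id) hV) Finset.disjoint_sdiff).symm
        · exact k1' hV hW hne
      · rw [Finset.sup_union, g2, k2, Finset.sup_eq_union,
          Finset.union_sdiff_of_subset hI]
      · rw [Finset.mem_union]
        rintro (h | h)
        · exact g3 h
        · exact k3 h
    · exact Finset.subset_union_left
  · rintro ⟨A, S⟩ hx
    rw [Finset.mem_sigma, Finset.mem_powerset] at hx
    simp [Finset.union_sdiff_of_subset hx.2]
  · rintro ⟨I, A1, A2⟩ hy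
    rw [Finset.mem_sigma, Finset.mem_powerset, Finset.mem_product] at hy
    obtain ⟨hI, hA1, hA2⟩ := hy
    simp only at hI hA1 hA2 ⊢
    obtain ⟨g1, g2, g3⟩ := mem_partsSet.1 hA1
    obtain ⟨k1, k2, k3⟩ := mem_partsSet.1 hA2
    have hd12 : Disjoint A1 A2 := by
      rw [Finset.disjoint_left]
      intro V hV1 hV2
      have hVI : V ⊆ I := g2 ▸ Finset.le_sup (f := id) hV1
      have hVc : V ⊆ s \ I := k2 ▸ Finset.le_sup (f := id) hV2
      have : V = ∅ := by
        rw [← Finset.subset_empty]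
        intro x hx
        exact absurd (hVI hx) (Finset.mem_sdiff.1 (hVc hx)).2
      exact g3 (by rw [Finset.bot_eq_empty, ← this]; exact hV1)
    simp [g2, Finset.union_sdiff_cancel_left hd12]
  · rintro ⟨A, S⟩ hx
    rfl

lemma TT_add (f g : ℕ → ℝ) (k : ℕ) :
    TT (fun m => f m + g m) k
      = ∑ i ∈ Finset.range (k + 1), (k.choose i : ℝ) * (TT f i * TT g (k - i)) := by
  classical
  have h0 : TT (fun m => f m + g m) k
      = ∑ A ∈ partsSet (Finset.univ : Finset (Fin k)), ∏ V ∈ A, (f V.card + g V.card) := rfl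
  rw [h0, US_split]
  have h1 : ∀ I ∈ (Finset.univ : Finset (Fin k)).powerset,
      US f I * US g (Finset.univ \ I) = TT f I.card * TT g (k - I.card) := by
    intro I _
    rw [US_eq_TT, US_eq_TT]
    congr 2
    rw [Finset.card_sdiff_of_subset (Finset.subset_univ I)]
    simp
  rw [Finset.sum_congr rfl h1]
  have h2 := Finset.sum_powerset_apply_card (fun n => TT f n * TT g (k - n))
    (x := (Finset.univ : Finset (Fin k)))
  simp only [Finset.card_univ, Fintype.card_fin] at h2
  rw [h2]
  exact Finset.sum_congr rfl (fun i _ => by rw [nsmul_eq_mul])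

/-- The partition sum appearing in `cumulantRel`. -/
noncomputable def sC (N : ℕ) (κ : ℕ → ℝ) (k : ℕ) : ℝ :=
  ∑ π : Finpartition (Finset.univ : Finset (Fin k)),
    (-1 : ℝ) ^ (k - π.parts.card) * (N : ℝ) ^ π.parts.card *
      ∏ V ∈ π.parts, ((Nat.factorial (V.card - 1) : ℝ) * κ V.card)

noncomputable def wF (N : ℕ) (κ : ℕ → ℝ) (m : ℕ) : ℝ :=
  (-1 : ℝ) ^ (m - 1) * (N : ℝ) * ((Nat.factorial (m - 1) : ℝ) * κ m)

lemma sC_eq_TT (N : ℕ) (κ : ℕ → ℝ) (k : ℕ) : sC N κ k = TT (wF N κ) k := by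
  classical
  rw [sC, TT, US,
    sum_finpartition_eq (Finset.univ : Finset (Fin k)) (fun A =>
      (-1 : ℝ) ^ (k - A.card) * (N : ℝ) ^ A.card *
        ∏ V ∈ A, ((Nat.factorial (V.card - 1) : ℝ) * κ V.card))]
  refine Finset.sum_congr rfl (fun A hA => ?_)
  obtain ⟨h1, h2, h3⟩ := mem_partsSet.1 hA
  have hsum : ∑ V ∈ A, V.card = k := by
    have := Finpartition.sum_card_parts ⟨A, h1, h2, h3⟩
    simpa using this
  have hpos : ∀ V ∈ A, 1 ≤ V.card := by
    intro V hV
    rcases Finset.eq_empty_or_nonempty V with h | h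
    · exact absurd (by rw [Finset.bot_eq_empty, ← h]; exact hV) h3
    · exact h.card_pos
  have hcards : ∑ V ∈ A, (V.card - 1) = k - A.card := by
    have e1 : ∑ V ∈ A, (V.card - 1) + A.card = k := by
      calc ∑ V ∈ A, (V.card - 1) + A.card
          = ∑ V ∈ A, (V.card - 1) + ∑ _V ∈ A, 1 := by
            rw [Finset.sum_const, smul_eq_mul, mul_one]
        _ = ∑ V ∈ A, ((V.card - 1) + 1) := Finset.sum_add_distrib.symm
        _ = ∑ V ∈ A, V.card := Finset.sum_congr rfl
            (fun V hV => Nat.sub_add_cancel (hpos V hV))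
        _ = k := hsum
    omega
  rw [pW]
  unfold wF
  conv_rhs => rw [Finset.prod_mul_distrib, Finset.prod_mul_distrib, Finset.prod_const]
  rw [Finset.prod_pow_eq_pow_sum, hcards]

lemma sC_zero (N : ℕ) (κ : ℕ → ℝ) : sC N κ 0 = 1 := by
  rw [sC_eq_TT, TT_zero]

lemma sC_add (N : ℕ) (κ1 κ2 : ℕ → ℝ) (k : ℕ) :
    sC N (fun m => κ1 m + κ2 m) k
      = ∑ i ∈ Finset.range (k + 1), (k.choose i : ℝ) * (sC N κ1 i * sC N κ2 (k - i)) := by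
  have hw : wF N (fun m => κ1 m + κ2 m) = fun m => wF N κ1 m + wF N κ2 m := by
    funext m; unfold wF; ring
  rw [sC_eq_TT, hw, TT_add]
  exact Finset.sum_congr rfl (fun i _ => by rw [sC_eq_TT, sC_eq_TT])

/-- The prefactor in `cumulantRel`. -/
noncomputable def pref (N k : ℕ) : ℝ :=
  (Nat.descFactorial N k : ℝ) / ((N : ℝ) ^ k * (Nat.factorial k : ℝ))

lemma pref_zero (N : ℕ) : pref N 0 = 1 := by simp [pref]

lemma pref_ne_zero {N k : ℕ} (hk : k ≤ N) (hN : 1 ≤ N) : pref N k ≠ 0 := by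
  have h1 : (Nat.descFactorial N k : ℝ) ≠ 0 := by
    rw [Nat.cast_ne_zero]
    intro h
    exact absurd (Nat.descFactorial_eq_zero_iff_lt.1 h) (not_lt.2 hk)
  have h2 : ((N : ℝ) ^ k) ≠ 0 := pow_ne_zero _ (by positivity)
  have h3 : ((Nat.factorial k : ℝ)) ≠ 0 := by
    exact_mod_cast (Nat.factorial_ne_zero k)
  exact div_ne_zero h1 (mul_ne_zero h2 h3)

lemma pref_identity {N i j k : ℕ} (hk : i + j = k) (hkN : k ≤ N) (hN : 1 ≤ N) :
    pref N k * (k.choose i : ℝ)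
      = ((Nat.factorial (N - i) : ℝ) * (Nat.factorial (N - j) : ℝ) /
          ((Nat.factorial N : ℝ) * (Nat.factorial (N - k) : ℝ))) *
        pref N i * pref N j := by
  subst hk
  have hiN : i ≤ N := by omega
  have hjN : j ≤ N := by omega
  have di : ((N - i).factorial : ℝ) * (N.descFactorial i : ℝ) = (N.factorial : ℝ) := by
    exact_mod_cast congrArg Nat.cast (Nat.factorial_mul_descFactorial hiN)
  have dj : ((N - j).factorial : ℝ) * (N.descFactorial j : ℝ) = (N.factorial : ℝ) := by
    exact_mod_cast congrArg Nat.cast (Nat.factorial_mul_descFactorial hjN)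
  have dk : ((N - (i + j)).factorial : ℝ) * (N.descFactorial (i + j) : ℝ)
      = (N.factorial : ℝ) := by
    exact_mod_cast congrArg Nat.cast (Nat.factorial_mul_descFactorial hkN)
  have hc : (((i + j).choose i : ℝ)) = ((i + j).factorial : ℝ) /
      ((i.factorial : ℝ) * (j.factorial : ℝ)) := by
    rw [Nat.cast_choose ℝ (Nat.le_add_right i j), Nat.add_sub_cancel_left]
  have fne : ∀ m : ℕ, ((m.factorial : ℝ)) ≠ 0 := fun m => by
    exact_mod_cast m.factorial_ne_zero
  have hNne : (N : ℝ) ≠ 0 := by positivity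
  have di' : (N.descFactorial i : ℝ) = (N.factorial : ℝ) / ((N - i).factorial : ℝ) := by
    rw [eq_div_iff (fne _)]
    linear_combination di
  have dj' : (N.descFactorial j : ℝ) = (N.factorial : ℝ) / ((N - j).factorial : ℝ) := by
    rw [eq_div_iff (fne _)]
    linear_combination dj
  have dk' : (N.descFactorial (i + j) : ℝ)
      = (N.factorial : ℝ) / ((N - (i + j)).factorial : ℝ) := by
    rw [eq_div_iff (fne _)]
    linear_combination dk
  unfold pref
  rw [hc, di', dj', dk']
  have hNpne : ∀ m : ℕ, ((N : ℝ) ^ m) ≠ 0 := fun m => pow_ne_zero _ hNne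
  field_simp
  ring

lemma cumulantRel_iff (N : ℕ) (a κ : ℕ → ℝ) :
    cumulantRel N a κ ↔ ∀ k, 1 ≤ k → k ≤ N → a k = pref N k * sC N κ k :=
  Iff.rfl

lemma coeffSeq_zero_of_monic {N : ℕ} {p : Polynomial ℝ} (hp : p.Monic)
    (hpd : p.natDegree = N) : coeffSeq N p 0 = 1 := by
  rw [coeffSeq, pow_zero, one_mul, Nat.sub_zero, ← hpd]
  exact hp.coeff_natDegree

lemma coeffSeq_ffconv (N : ℕ) (p q : Polynomial ℝ) {k : ℕ} (h1 : 1 ≤ k) (h2 : k ≤ N) :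
    coeffSeq N (ffconv N p q) k =
      ∑ ij ∈ Finset.HasAntidiagonal.antidiagonal k,
        ((Nat.factorial (N - ij.1) : ℝ) * (Nat.factorial (N - ij.2) : ℝ) /
            ((Nat.factorial N : ℝ) * (Nat.factorial (N - k) : ℝ))) *
          coeffSeq N p ij.1 * coeffSeq N q ij.2 := by
  rw [coeffSeq, ffconv, Polynomial.coeff_add, Polynomial.coeff_X_pow,
    Polynomial.finset_sum_coeff]
  rw [if_neg (by omega : ¬ (N - k = N)), zero_add]
  have hz : ∀ k' ∈ Finset.Icc 1 N, k' ≠ k →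
      (Polynomial.C ((-1 : ℝ) ^ k' *
        ∑ ij ∈ Finset.HasAntidiagonal.antidiagonal k',
          ((Nat.factorial (N - ij.1) : ℝ) * (Nat.factorial (N - ij.2) : ℝ) /
              ((Nat.factorial N : ℝ) * (Nat.factorial (N - k') : ℝ))) *
            coeffSeq N p ij.1 * coeffSeq N q ij.2) * X ^ (N - k')).coeff (N - k) = 0 := by
    intro k' hk' hne
    rw [Finset.mem_Icc] at hk'
    rw [Polynomial.coeff_C_mul, Polynomial.coeff_X_pow,
      if_neg (by omega : ¬ (N - k = N - k')), mul_zero]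
  rw [Finset.sum_eq_single k hz (fun h => absurd (Finset.mem_Icc.2 ⟨h1, h2⟩) h)]
  rw [Polynomial.coeff_C_mul, Polynomial.coeff_X_pow, if_pos rfl, mul_one]
  rw [← mul_assoc, ← mul_pow]
  norm_num

lemma sC_cancel {N : ℕ} (κ1 κ2 : ℕ → ℝ) {j : ℕ} (hj1 : 1 ≤ j) (hN : 1 ≤ N)
    (hagree : ∀ m, 1 ≤ m → m < j → κ1 m = κ2 m)
    (hsc : sC N κ1 j = sC N κ2 j) :
    κ1 j = κ2 j := by
  classical
  haveI : Nonempty (Fin j) := Fin.pos_iff_nonempty.1 (by omega)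
  have hne : (Finset.univ : Finset (Fin j)) ≠ ⊥ := by
    rw [Finset.bot_eq_empty]
    exact Finset.univ_nonempty.ne_empty
  set π₀ : Finpartition (Finset.univ : Finset (Fin j)) := Finpartition.indiscrete hne
    with hπ₀
  have hπ₀parts : π₀.parts = {Finset.univ} := rfl
  set F : (ℕ → ℝ) → Finpartition (Finset.univ : Finset (Fin j)) → ℝ := fun κ π =>
    (-1 : ℝ) ^ (j - π.parts.card) * (N : ℝ) ^ π.parts.card *
      ∏ V ∈ π.parts, ((Nat.factorial (V.card - 1) : ℝ) * κ V.card) with hF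
  have hsplit : ∀ κ, sC N κ j = (∑ π ∈ Finset.univ.erase π₀, F κ π) + F κ π₀ := by
    intro κ
    rw [sC, Finset.sum_erase_add _ _ (Finset.mem_univ π₀)]
  rw [hsplit, hsplit] at hsc
  have hrest : ∀ π ∈ Finset.univ.erase π₀, F κ1 π = F κ2 π := by
    intro π hπ
    have hπne : π ≠ π₀ := (Finset.mem_erase.1 hπ).1
    have hsmall : ∀ V ∈ π.parts, V.card < j := by
      intro V hV
      by_contra hc
      push_neg at hc
      have hVcard : V.card = j := le_antisymm (by simpa using Finset.card_le_univ V) hc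
      have hVu : V = Finset.univ := Finset.eq_univ_of_card V (by simpa using hVcard)
      have huniv_mem : Finset.univ ∈ π.parts := by rwa [hVu] at hV
      have hparts : π.parts = {Finset.univ} := by
        apply Finset.eq_singleton_iff_unique_mem.2
        refine ⟨huniv_mem, fun W hW => ?_⟩
        by_contra hWne
        have hd : Disjoint W Finset.univ :=
          π.disjoint (Finset.mem_coe.2 hW) (Finset.mem_coe.2 huniv_mem) hWne
        rw [← Finset.top_eq_univ, disjoint_top] at hd
        exact π.bot_notMem (hd ▸ hW)
      exact hπne (Finpartition.ext (hparts.trans hπ₀parts.symm))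
    have : ∀ V ∈ π.parts, ((Nat.factorial (V.card - 1) : ℝ) * κ1 V.card)
        = ((Nat.factorial (V.card - 1) : ℝ) * κ2 V.card) := by
      intro V hV
      have h1 : 1 ≤ V.card := by
        rcases Finset.eq_empty_or_nonempty V with h | h
        · exact absurd (by rw [Finset.bot_eq_empty, ← h]; exact hV) π.bot_notMem
        · exact h.card_pos
      rw [hagree V.card h1 (hsmall V hV)]
    rw [hF]
    dsimp only
    rw [Finset.prod_congr rfl this]
  rw [Finset.sum_congr rfl hrest] at hsc
  have hkey : F κ1 π₀ = F κ2 π₀ := by linarith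
  rw [hF] at hkey
  simp only [hπ₀parts, Finset.card_singleton, Finset.prod_singleton, Finset.card_univ,
    Fintype.card_fin] at hkey
  have hcne : ((-1 : ℝ) ^ (j - 1) * (N : ℝ) ^ 1 * (Nat.factorial (j - 1) : ℝ)) ≠ 0 := by
    apply mul_ne_zero (mul_ne_zero (pow_ne_zero _ (by norm_num)) _)
    · exact_mod_cast (j - 1).factorial_ne_zero
    · positivity
  apply mul_left_cancel₀ hcne
  linear_combination hkey

lemma cumulant_unique (N : ℕ) (a : ℕ → ℝ) (κ1 κ2 : ℕ → ℝ)
    (h1 : ∀ k, 1 ≤ k → k ≤ N → a k = pref N k * sC N κ1 k)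
    (h2 : ∀ k, 1 ≤ k → k ≤ N → a k = pref N k * sC N κ2 k) :
    ∀ j, 1 ≤ j → j ≤ N → κ1 j = κ2 j := by
  intro j
  induction j using Nat.strong_induction_on with
  | _ j ih =>
    intro hj1 hjN
    have hN : 1 ≤ N := le_trans hj1 hjN
    have e : pref N j * sC N κ1 j = pref N j * sC N κ2 j :=
      (h1 j hj1 hjN).symm.trans (h2 j hj1 hjN)
    have hsc : sC N κ1 j = sC N κ2 j := mul_left_cancel₀ (pref_ne_zero hjN hN) e
    exact sC_cancel κ1 κ2 hj1 hN (fun m hm1 hm2 => ih m hm2 hm1 (by omega)) hsc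

/-- finite free cumulants are additive under `⊞_N`. -/
theorem cumulants_additive (N : ℕ) (p q : Polynomial ℝ)
    (hp : p.Monic) (hq : q.Monic) (hpd : p.natDegree = N) (hqd : q.natDegree = N)
    (κp κq κpq : ℕ → ℝ)
    (hκp : cumulantRel N (coeffSeq N p) κp)
    (hκq : cumulantRel N (coeffSeq N q) κq)
    (hκpq : cumulantRel N (coeffSeq N (ffconv N p q)) κpq) :
    ∀ j, 1 ≤ j → j ≤ N → κpq j = κp j + κq j := by
  intro j hj1 hjN
  have hN : 1 ≤ N := le_trans hj1 hjN
  have hκp' := (cumulantRel_iff N _ κp).1 hκp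
  have hκq' := (cumulantRel_iff N _ κq).1 hκq
  have hκpq' := (cumulantRel_iff N _ κpq).1 hκpq
  have hap : ∀ i, i ≤ N → coeffSeq N p i = pref N i * sC N κp i := by
    intro i hi
    rcases Nat.eq_zero_or_pos i with rfl | hpos
    · rw [coeffSeq_zero_of_monic hp hpd, sC_zero, pref_zero, mul_one]
    · exact hκp' i hpos hi
  have haq : ∀ i, i ≤ N → coeffSeq N q i = pref N i * sC N κq i := by
    intro i hi
    rcases Nat.eq_zero_or_pos i with rfl | hpos
    · rw [coeffSeq_zero_of_monic hq hqd, sC_zero, pref_zero, mul_one]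
    · exact hκq' i hpos hi
  have hrel : ∀ k, 1 ≤ k → k ≤ N →
      coeffSeq N (ffconv N p q) k = pref N k * sC N (fun m => κp m + κq m) k := by
    intro k hk1 hk2
    rw [coeffSeq_ffconv N p q hk1 hk2]
    calc ∑ ij ∈ Finset.HasAntidiagonal.antidiagonal k,
          ((Nat.factorial (N - ij.1) : ℝ) * (Nat.factorial (N - ij.2) : ℝ) /
              ((Nat.factorial N : ℝ) * (Nat.factorial (N - k) : ℝ))) *
            coeffSeq N p ij.1 * coeffSeq N q ij.2
        = ∑ ij ∈ Finset.HasAntidiagonal.antidiagonal k,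
            pref N k * ((k.choose ij.1 : ℝ) * (sC N κp ij.1 * sC N κq ij.2)) := by
          refine Finset.sum_congr rfl (fun ij hij => ?_)
          have hsum : ij.1 + ij.2 = k := Finset.HasAntidiagonal.mem_antidiagonal.1 hij
          have hi : ij.1 ≤ N := by omega
          have hj : ij.2 ≤ N := by omega
          rw [hap _ hi, haq _ hj]
          have hid := pref_identity hsum hk2 hN
          linear_combination (-(sC N κp ij.1 * sC N κq ij.2)) * hid
      _ = pref N k * ∑ ij ∈ Finset.HasAntidiagonal.antidiagonal k,
            (k.choose ij.1 : ℝ) * (sC N κp ij.1 * sC N κq ij.2) := by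
          rw [Finset.mul_sum]
      _ = pref N k * ∑ i ∈ Finset.range (k + 1),
            (k.choose i : ℝ) * (sC N κp i * sC N κq (k - i)) := by
          rw [Finset.Nat.sum_antidiagonal_eq_sum_range_succ_mk]
      _ = pref N k * sC N (fun m => κp m + κq m) k := by rw [sC_add]
  exact cumulant_unique N (coeffSeq N (ffconv N p q)) κpq (fun m => κp m + κq m)
    hκpq' hrel j hj1 hjN
end

section
/- Translation of roots only changes the first finite free cumulant: for a monic degree-N polynomial p and c ∈ ℝ, setting p_c(x) = p(x − c), one has κ_1^N(p_c) = κ_1^N(p) + c and κ_j^N(p_c) = κ_j^N(p) for all 2 ≤ j ≤ N. -/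
open Polynomial Finset

variable {α β : Type*}

/-- Partition sum: sum over all finpartitions of `s` of the product of `g` of block sizes. -/
noncomputable def PS [DecidableEq α] (g : ℕ → ℝ) (s : Finset α) : ℝ :=
  ∑ π : Finpartition s, ∏ V ∈ π.parts, g V.card

lemma PS_empty [DecidableEq α] (g : ℕ → ℝ) : PS g (∅ : Finset α) = 1 := by
  have hsub : Subsingleton (Finpartition (∅ : Finset α)) := by
    constructor
    intro a b
    ext1
    rw [Finpartition.parts_eq_empty_iff.2 rfl, Finpartition.parts_eq_empty_iff.2 rfl]
  rw [PS, Fintype.sum_subsingleton _ ((Finpartition.empty (Finset α)).copy bot_eq_empty)]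
  simp [Finpartition.copy, Finpartition.empty]

lemma PS_nil (g : ℕ → ℝ) : PS g (univ : Finset (Fin 0)) = 1 := by
  rw [Finset.univ_eq_empty]; exact PS_empty g

/-- Map a finpartition along an embedding. -/
def Finpartition.mapEmb [DecidableEq α] [DecidableEq β] (f : α ↪ β) {s : Finset α}
    (π : Finpartition s) : Finpartition (s.map f) where
  parts := π.parts.image (Finset.map f)
  supIndep := by
    rw [Finset.supIndep_iff_pairwiseDisjoint]
    intro u hu v hv huv
    simp only [coe_image, Set.mem_image, mem_coe] at hu hv
    obtain ⟨a, ha, rfl⟩ := hu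
    obtain ⟨b, hb, rfl⟩ := hv
    have hab : a ≠ b := fun h => huv (by rw [h])
    have := π.disjoint ha hb hab
    simp only [Function.onFun, id] at this ⊢
    exact (Finset.disjoint_map f).2 this
  sup_parts := by
    ext x
    simp only [Finset.mem_sup, mem_image, id, Finset.mem_map]
    constructor
    · rintro ⟨W, ⟨V, hV, rfl⟩, hx⟩
      simp only [Finset.mem_map] at hx
      obtain ⟨a, ha, rfl⟩ := hx
      exact ⟨a, by rw [← π.sup_parts]; exact Finset.le_sup (f := id) hV ha, rfl⟩
    · rintro ⟨a, ha, rfl⟩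
      rw [← π.sup_parts] at ha
      simp only [Finset.mem_sup, id] at ha
      obtain ⟨V, hV, haV⟩ := ha
      exact ⟨V.map f, ⟨V, hV, rfl⟩, Finset.mem_map_of_mem f haV⟩
  bot_notMem := by
    simp only [bot_eq_empty, mem_image]
    rintro ⟨V, hV, hVe⟩
    rw [Finset.map_eq_empty] at hVe
    exact π.bot_notMem (by rwa [hVe] at hV)

lemma map_preimage_of_subset_s14 [DecidableEq α] (f : α ↪ β) {W : Finset β} {s : Finset α}
    (h : W ⊆ s.map f) : (W.preimage f f.injective.injOn).map f = W := by
  ext b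
  simp only [Finset.mem_map, Finset.mem_preimage]
  constructor
  · rintro ⟨a, ha, rfl⟩; exact ha
  · intro hb
    obtain ⟨a, _, rfl⟩ := Finset.mem_map.1 (h hb)
    exact ⟨a, hb, rfl⟩

/-- Pull back a finpartition along an embedding. -/
noncomputable def Finpartition.comapEmb [DecidableEq α] [DecidableEq β] (f : α ↪ β) {s : Finset α}
    (σ : Finpartition (s.map f)) : Finpartition s where
  parts := σ.parts.image (fun W => W.preimage f f.injective.injOn)
  supIndep := by
    rw [Finset.supIndep_iff_pairwiseDisjoint]
    intro u hu v hv huv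
    simp only [coe_image, Set.mem_image, mem_coe] at hu hv
    obtain ⟨W, hW, rfl⟩ := hu
    obtain ⟨W', hW', rfl⟩ := hv
    have hWW' : W ≠ W' := fun h => huv (by rw [h])
    have hd := σ.disjoint hW hW' hWW'
    simp only [Function.onFun, id] at hd ⊢
    rw [Finset.disjoint_left] at hd ⊢
    intro a ha ha'
    exact hd (Finset.mem_preimage.1 ha) (Finset.mem_preimage.1 ha')
  sup_parts := by
    ext x
    simp only [Finset.mem_sup, mem_image, id]
    constructor
    · rintro ⟨u, ⟨W, hW, rfl⟩, hx⟩
      have := σ.le hW (Finset.mem_preimage.1 hx)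
      rwa [Finset.mem_map' f] at this
    · intro hx
      have : f x ∈ s.map f := Finset.mem_map_of_mem f hx
      rw [← σ.sup_parts] at this
      simp only [Finset.mem_sup, id] at this
      obtain ⟨W, hW, hfW⟩ := this
      exact ⟨W.preimage f f.injective.injOn, ⟨W, hW, rfl⟩, Finset.mem_preimage.2 hfW⟩
  bot_notMem := by
    simp only [bot_eq_empty, mem_image]
    rintro ⟨W, hW, hWe⟩
    have := map_preimage_of_subset_s14 f (σ.le hW)
    rw [hWe, Finset.map_empty] at this
    exact σ.bot_notMem (by rwa [← this] at hW)

lemma PS_map [DecidableEq α] [DecidableEq β] (g : ℕ → ℝ) (f : α ↪ β) (s : Finset α) :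
    PS g (s.map f) = PS g s := by
  classical
  rw [PS, PS]
  refine Finset.sum_nbij' (Finpartition.comapEmb f) (Finpartition.mapEmb f)
    (fun _ _ => mem_univ _) (fun _ _ => mem_univ _) ?_ ?_ ?_
  · -- mapEmb (comapEmb σ) = σ
    intro σ _
    ext1
    show ((σ.parts.image (fun W => W.preimage f f.injective.injOn)).image (Finset.map f)
      : Finset (Finset β)) = σ.parts
    rw [Finset.image_image]
    refine Finset.image_congr ?_ |>.trans (Finset.image_id)
    intro W hW
    exact map_preimage_of_subset_s14 f (σ.le hW)
  · -- comapEmb (mapEmb π) = π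
    intro π _
    ext1
    show ((π.parts.image (Finset.map f)).image (fun W => W.preimage f f.injective.injOn)
      : Finset (Finset α)) = π.parts
    rw [Finset.image_image]
    refine Finset.image_congr ?_ |>.trans (Finset.image_id)
    intro V _
    exact Finset.preimage_map f V
  · -- summands
    intro σ _
    show (∏ V ∈ σ.parts, g V.card)
      = ∏ V ∈ σ.parts.image (fun W => W.preimage f f.injective.injOn), g V.card
    rw [Finset.prod_image]
    · refine Finset.prod_congr rfl fun W hW => ?_
      rw [← map_preimage_of_subset_s14 f (σ.le hW), Finset.card_map,
        Finset.preimage_map]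
    · intro W hW W' hW' h
      rw [← map_preimage_of_subset_s14 f (σ.le hW), ← map_preimage_of_subset_s14 f (σ.le hW')]; exact congrArg (Finset.map f) h

lemma PS_card [LinearOrder α] [DecidableEq α] (g : ℕ → ℝ) (s : Finset α) :
    PS g s = PS g (univ : Finset (Fin s.card)) := by
  classical
  have h : (univ : Finset (Fin s.card)).map (s.orderEmbOfFin rfl).toEmbedding = s := by
    ext x
    simp only [Finset.mem_map, mem_univ, true_and]
    constructor
    · rintro ⟨i, rfl⟩; exact Finset.orderEmbOfFin_mem s rfl i
    · intro hx
      have : x ∈ Set.range (s.orderEmbOfFin rfl) := by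
        rw [Finset.range_orderEmbOfFin]; exact hx
      obtain ⟨i, hi⟩ := this
      exact ⟨i, hi⟩
  conv_lhs => rw [← h]
  rw [PS_map]

lemma sup_sdiff_parts [DecidableEq α] {s : Finset α} (π : Finpartition s)
    {t : Finset (Finset α)} (ht : t ⊆ π.parts) :
    (π.parts \ t).sup id = s \ t.sup id := by
  ext x
  simp only [Finset.mem_sup, mem_sdiff, id]
  constructor
  · rintro ⟨V, ⟨hV, hVt⟩, hx⟩
    refine ⟨π.le hV hx, ?_⟩
    rintro ⟨W, hW, hxW⟩
    exact hVt (by rwa [π.eq_of_mem_parts hV (ht hW) hx hxW])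
  · rintro ⟨hxs, hnx⟩
    obtain ⟨V, hV, hxV⟩ := π.exists_mem hxs
    exact ⟨V, ⟨hV, fun hVt => hnx ⟨V, hVt, hxV⟩⟩, hxV⟩

lemma image_singleton_sup [DecidableEq α] {t : Finset (Finset α)}
    (ht : ∀ V ∈ t, V.card = 1) :
    (t.sup id).image (fun a => ({a} : Finset α)) = t := by
  ext V
  simp only [mem_image, Finset.mem_sup, id]
  constructor
  · rintro ⟨x, ⟨W, hW, hxW⟩, rfl⟩
    obtain ⟨w, rfl⟩ := Finset.card_eq_one.1 (ht W hW)
    rw [Finset.mem_singleton] at hxW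
    rwa [hxW]
  · intro hV
    obtain ⟨v, rfl⟩ := Finset.card_eq_one.1 (ht V hV)
    exact ⟨v, ⟨{v}, hV, Finset.mem_singleton_self v⟩, rfl⟩

/-- Extend a partition of `s \ M` by singletons of `M`. -/
noncomputable def addSingles [DecidableEq α] {s : Finset α} (M : Finset α) (hM : M ⊆ s)
    (σ : Finpartition (s \ M)) : Finpartition s where
  parts := σ.parts ∪ M.image (fun a => {a})
  supIndep := by
    rw [Finset.supIndep_iff_pairwiseDisjoint]
    intro u hu v hv huv
    simp only [coe_union, Set.mem_union, mem_coe, coe_image, Set.mem_image] at hu hv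
    simp only [Function.onFun, id]
    rcases hu with hu | ⟨a, ha, rfl⟩ <;> rcases hv with hv | ⟨b, hb, rfl⟩
    · exact σ.disjoint hu hv huv
    · rw [Finset.disjoint_singleton_right]
      intro hau
      exact (Finset.mem_sdiff.1 (σ.le hu hau)).2 hb
    · rw [Finset.disjoint_singleton_left]
      intro hav
      exact (Finset.mem_sdiff.1 (σ.le hv hav)).2 ha
    · rw [Finset.disjoint_singleton_left, Finset.mem_singleton]
      exact fun h => huv (by rw [h])
  sup_parts := by
    rw [Finset.sup_union, σ.sup_parts]
    have him : (M.image (fun a => ({a} : Finset α))).sup id = M := by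
      ext x
      simp only [Finset.mem_sup, mem_image, id]
      constructor
      · rintro ⟨V, ⟨a, ha, rfl⟩, hx⟩
        rw [Finset.mem_singleton] at hx
        rwa [hx]
      · intro hx; exact ⟨{x}, ⟨x, hx, rfl⟩, Finset.mem_singleton_self x⟩
    rw [him, Finset.sup_eq_union, Finset.sdiff_union_of_subset hM]
  bot_notMem := by
    simp only [bot_eq_empty, Finset.mem_union, mem_image]
    rintro (h | ⟨a, _, ha⟩)
    · exact σ.bot_notMem h
    · exact Finset.singleton_ne_empty a ha

lemma PS_add_single [DecidableEq α] (g : ℕ → ℝ) (c : ℝ) (s : Finset α) :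
    PS (fun n => g n + c * (if n = 1 then 1 else 0)) s
      = ∑ M ∈ s.powerset, c ^ M.card * PS g (s \ M) := by
  classical
  rw [PS]
  have step1 : ∀ π : Finpartition s,
      (∏ V ∈ π.parts, (g V.card + c * (if V.card = 1 then 1 else 0)))
      = ∑ t ∈ π.parts.powerset.filter (fun t => ∀ V ∈ t, V.card = 1),
          c ^ t.card * ∏ V ∈ π.parts \ t, g V.card := by
    intro π
    have : ∀ V ∈ π.parts, (g V.card + c * (if V.card = 1 then 1 else 0))
        = (if V.card = 1 then c else 0) + g V.card := by
      intro V _; split_ifs <;> ring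
    rw [Finset.prod_congr rfl this, Finset.prod_add]
    rw [Finset.sum_filter]
    refine Finset.sum_congr rfl fun t _ => ?_
    by_cases h : ∀ V ∈ t, V.card = 1
    · rw [if_pos h]
      congr 1
      rw [Finset.prod_congr rfl (fun V hV => if_pos (h V hV)), Finset.prod_const]
    · rw [if_neg h]
      push_neg at h
      obtain ⟨V, hV, hc⟩ := h
      rw [Finset.prod_eq_zero (f := fun V : Finset α => if V.card = 1 then c else 0) hV (if_neg hc), zero_mul]
  rw [Fintype.sum_congr _ _ step1]
  rw [Finset.sum_sigma' univ
    (fun π : Finpartition s => π.parts.powerset.filter (fun t => ∀ V ∈ t, V.card = 1))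
    (fun π t => c ^ t.card * ∏ V ∈ π.parts \ t, g V.card)]
  rw [← Finset.sum_fiberwise_of_maps_to (g := fun x => x.2.sup id) (t := s.powerset)
    (fun x hx => ?_)]
  swap
  · rw [Finset.mem_sigma, Finset.mem_filter, Finset.mem_powerset] at hx
    rw [Finset.mem_powerset]
    exact fun a ha => by
      simp only [Finset.mem_sup, id] at ha
      obtain ⟨V, hV, haV⟩ := ha
      exact x.1.le (hx.2.1 hV) haV
  refine Finset.sum_congr rfl fun M hM => ?_
  rw [Finset.mem_powerset] at hM
  rw [PS, Finset.mul_sum]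
  refine Finset.sum_bij' (i := fun x hx =>
      (x.1.ofSubset (Finset.sdiff_subset (t := x.2)) (by
        rw [Finset.mem_filter, Finset.mem_sigma, Finset.mem_filter, Finset.mem_powerset] at hx
        rw [sup_sdiff_parts x.1 hx.1.2.1, hx.2]) : Finpartition (s \ M)))
    (j := fun σ _ => ⟨addSingles M hM σ, M.image (fun a => {a})⟩)
    ?_ ?_ ?_ ?_ ?_
  · intro x hx; exact mem_univ _
  · -- j maps into the filtered sigma set
    intro σ _
    rw [Finset.mem_filter, Finset.mem_sigma, Finset.mem_filter, Finset.mem_powerset]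
    refine ⟨⟨mem_univ _, ?_, ?_⟩, ?_⟩
    · exact Finset.subset_union_right
    · rintro V hV
      simp only [mem_image] at hV
      obtain ⟨a, _, rfl⟩ := hV
      exact Finset.card_singleton a
    · -- sup of singleton image is M
      ext x
      simp only [Finset.mem_sup, mem_image, id]
      constructor
      · rintro ⟨V, ⟨a, ha, rfl⟩, hx⟩
        rw [Finset.mem_singleton] at hx; rwa [hx]
      · intro hx; exact ⟨{x}, ⟨x, hx, rfl⟩, Finset.mem_singleton_self x⟩
  · -- left inverse
    intro x hx
    rw [Finset.mem_filter, Finset.mem_sigma, Finset.mem_filter, Finset.mem_powerset] at hx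
    obtain ⟨⟨_, hsub, hsing⟩, hsup⟩ := hx
    have ht : x.2 = M.image (fun a => ({a} : Finset α)) := by
      rw [← hsup, image_singleton_sup hsing]
    refine Sigma.ext ?_ (heq_of_eq ?_)
    · ext1
      show ((x.1.parts \ x.2) ∪ M.image (fun a => {a}) : Finset (Finset α)) = x.1.parts
      rw [← ht, Finset.sdiff_union_of_subset hsub]
    · exact ht.symm
  · -- right inverse
    intro σ _
    ext1
    show ((σ.parts ∪ M.image (fun a => {a})) \ M.image (fun a => {a}) : Finset (Finset α))
      = σ.parts
    rw [Finset.union_sdiff_cancel_right]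
    rw [Finset.disjoint_right]
    rintro V hV hV'
    simp only [mem_image] at hV
    obtain ⟨a, ha, rfl⟩ := hV
    exact (Finset.mem_sdiff.1 (σ.le hV' (Finset.mem_singleton_self a))).2 ha
  · -- summands
    intro x hx
    rw [Finset.mem_filter, Finset.mem_sigma, Finset.mem_filter, Finset.mem_powerset] at hx
    obtain ⟨⟨_, hsub, hsing⟩, hsup⟩ := hx
    have hcard : x.2.card = M.card := by
      rw [← hsup]
      conv_lhs => rw [← image_singleton_sup hsing]
      exact Finset.card_image_of_injective _ (fun a b h => Finset.singleton_injective h)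
    rw [hcard]
    rfl

lemma PS_shift (g : ℕ → ℝ) (c : ℝ) (k : ℕ) :
    PS (fun n => g n + c * (if n = 1 then 1 else 0)) (univ : Finset (Fin k))
      = ∑ m ∈ Finset.range (k + 1),
          (k.choose m : ℝ) * c ^ m * PS g (univ : Finset (Fin (k - m))) := by
  classical
  rw [PS_add_single]
  have h1 : ∀ M ∈ (univ : Finset (Fin k)).powerset,
      c ^ M.card * PS g (univ \ M)
        = c ^ M.card * PS g (univ : Finset (Fin (k - M.card))) := by
    intro M _
    have hc : (univ \ M : Finset (Fin k)).card = k - M.card := by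
      rw [Finset.card_univ_diff, Fintype.card_fin]
    rw [PS_card g (univ \ M), hc]
  rw [Finset.sum_congr rfl h1]
  rw [← Finset.sum_fiberwise_of_maps_to (g := fun M : Finset (Fin k) => M.card)
    (t := Finset.range (k + 1)) (fun M hM => by
      rw [Finset.mem_range, Nat.lt_succ_iff]
      simpa using Finset.card_le_card (Finset.mem_powerset.1 hM))]
  refine Finset.sum_congr rfl fun m hm => ?_
  have : (univ : Finset (Fin k)).powerset.filter (fun M => M.card = m)
      = Finset.powersetCard m (univ : Finset (Fin k)) := by
    rw [Finset.powersetCard_eq_filter]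
  rw [this]
  have hconst : ∀ M ∈ Finset.powersetCard m (univ : Finset (Fin k)),
      c ^ M.card * PS g (univ : Finset (Fin (k - M.card)))
        = c ^ m * PS g (univ : Finset (Fin (k - m))) := by
    intro M hMm
    rw [(Finset.mem_powersetCard.1 hMm).2]
  rw [Finset.sum_congr rfl hconst, Finset.sum_const, Finset.card_powersetCard,
    Finset.card_univ, Fintype.card_fin, nsmul_eq_mul, ← mul_assoc]

/-- The multiplicative kernel associated to a cumulant sequence. -/
noncomputable def hker (N : ℕ) (κ : ℕ → ℝ) : ℕ → ℝ :=
  fun n => (-1 : ℝ) ^ (n - 1) * (N : ℝ) * (Nat.factorial (n - 1) : ℝ) * κ n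

lemma partition_sum_eq (N : ℕ) (κ : ℕ → ℝ) (k : ℕ) :
    (∑ π : Finpartition (Finset.univ : Finset (Fin k)),
        (-1 : ℝ) ^ (k - π.parts.card) * (N : ℝ) ^ π.parts.card *
          ∏ V ∈ π.parts, ((Nat.factorial (V.card - 1) : ℝ) * κ V.card))
      = PS (hker N κ) (univ : Finset (Fin k)) := by
  rw [PS]
  refine Fintype.sum_congr _ _ fun π => ?_
  have hsum : (∑ V ∈ π.parts, (V.card - 1)) + π.parts.card = k := by
    have h1 : ∀ V ∈ π.parts, (V.card - 1) + 1 = V.card := by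
      intro V hV
      have := Finset.card_pos.2 (π.nonempty_of_mem_parts hV)
      omega
    calc (∑ V ∈ π.parts, (V.card - 1)) + π.parts.card
        = ∑ V ∈ π.parts, ((V.card - 1) + 1) := by
          rw [Finset.sum_add_distrib, Finset.sum_const, smul_eq_mul, mul_one]
      _ = ∑ V ∈ π.parts, V.card := Finset.sum_congr rfl h1
      _ = k := by rw [π.sum_card_parts, Finset.card_univ, Fintype.card_fin]
  have hexp : k - π.parts.card = ∑ V ∈ π.parts, (V.card - 1) := by omega
  rw [hexp]
  rw [show (hker N κ) = fun n => ((-1 : ℝ) ^ (n - 1) * (N : ℝ)) *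
    ((Nat.factorial (n - 1) : ℝ) * κ n) from funext fun n => by rw [hker]; ring]
  simp only [Finset.prod_mul_distrib]
  rw [Finset.prod_pow_eq_pow_sum, Finset.prod_const]

lemma PS_determine (k : ℕ) (hk : 1 ≤ k) (h1 h2 : ℕ → ℝ)
    (hagree : ∀ n, 1 ≤ n → n < k → h1 n = h2 n) :
    PS h1 (univ : Finset (Fin k)) - PS h2 (univ : Finset (Fin k)) = h1 k - h2 k := by
  classical
  haveI : NeZero k := ⟨by omega⟩
  have huniv : (univ : Finset (Fin k)) ≠ ⊥ := by
    rw [bot_eq_empty]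
    exact Finset.univ_nonempty.ne_empty
  set π₀ : Finpartition (univ : Finset (Fin k)) := Finpartition.indiscrete huniv with hπ₀
  rw [PS, PS, ← Finset.sum_sub_distrib]
  rw [← Finset.add_sum_erase _ _ (mem_univ π₀)]
  have h0 : (∏ V ∈ π₀.parts, h1 V.card) - (∏ V ∈ π₀.parts, h2 V.card) = h1 k - h2 k := by
    rw [hπ₀]
    simp only [Finpartition.indiscrete_parts, Finset.prod_singleton, Finset.card_univ,
      Fintype.card_fin]
  have hrest : ∀ π ∈ (univ : Finset (Finpartition (univ : Finset (Fin k)))).erase π₀,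
      (∏ V ∈ π.parts, h1 V.card) - (∏ V ∈ π.parts, h2 V.card) = 0 := by
    intro π hπ
    have hπne : π ≠ π₀ := (Finset.mem_erase.1 hπ).1
    have hlt : ∀ V ∈ π.parts, V.card < k := by
      intro V hV
      have hle : V.card ≤ k := by
        have := Finset.card_le_card (Finset.subset_univ V)
        rwa [Finset.card_univ, Fintype.card_fin] at this
      rcases lt_or_eq_of_le hle with h | h
      · exact h
      · exfalso
        have hVuniv : V = univ := Finset.eq_univ_of_card V (by rw [h, Fintype.card_fin])
        apply hπne
        ext1
        rw [hπ₀, Finpartition.indiscrete_parts]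
        have hmem : (univ : Finset (Fin k)) ∈ π.parts := hVuniv ▸ hV
        refine Finset.eq_singleton_iff_unique_mem.2 ⟨hmem, fun W hW => ?_⟩
        by_contra hWu
        have hd := π.disjoint hW hmem hWu
        obtain ⟨w, hw⟩ := π.nonempty_of_mem_parts hW
        exact (Finset.disjoint_left.1 hd) hw (mem_univ w)
    have : ∀ V ∈ π.parts, h1 V.card = h2 V.card := by
      intro V hV
      exact hagree V.card (Finset.card_pos.2 (π.nonempty_of_mem_parts hV)) (hlt V hV)
    rw [Finset.prod_congr rfl this, sub_self]
  rw [Finset.sum_eq_zero hrest, add_zero, h0]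

lemma descFactorial_add_eq (N j m : ℕ) :
    N.descFactorial (j + m) = N.descFactorial j * (N - j).descFactorial m := by
  induction m with
  | zero => simp
  | succ m ih =>
    rw [show j + (m + 1) = (j + m) + 1 from rfl, Nat.descFactorial_succ, ih,
      Nat.descFactorial_succ, show N - (j + m) = N - j - m from by omega]
    ring

lemma nat_key (N j m k : ℕ) (hjm : j + m = k) (hk : k ≤ N) :
    (N - j).choose m * N.descFactorial j * k.factorial
      = N.descFactorial k * k.choose m * j.factorial := by
  subst hjm
  rw [descFactorial_add_eq N j m, Nat.descFactorial_eq_factorial_mul_choose (N - j) m]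
  have h1 : (j + m).choose m * m.factorial * j.factorial = (j + m).factorial := by
    have := Nat.choose_mul_factorial_mul_factorial (Nat.le_add_left m j)
    rwa [Nat.add_sub_cancel] at this
  rw [← h1]
  ring

lemma D_key (N k m : ℕ) (hm : m ≤ k) (hk : k ≤ N) (hN : 1 ≤ N) :
    ((N - (k - m)).choose m : ℝ) *
        ((Nat.descFactorial N (k - m) : ℝ) / ((N : ℝ) ^ (k - m) * (Nat.factorial (k - m) : ℝ)))
      = ((Nat.descFactorial N k : ℝ) / ((N : ℝ) ^ k * (Nat.factorial k : ℝ))) *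
        ((k.choose m : ℝ) * (N : ℝ) ^ m) := by
  have hNR : (N : ℝ) ≠ 0 := Nat.cast_ne_zero.2 (by omega)
  have keyN := nat_key N (k - m) m k (by omega) hk
  have hcast : (((N - (k - m)).choose m : ℝ)) * (N.descFactorial (k - m) : ℝ) * (k.factorial : ℝ)
      = (N.descFactorial k : ℝ) * (k.choose m : ℝ) * ((k - m).factorial : ℝ) := by
    exact_mod_cast congrArg (Nat.cast (R := ℝ)) keyN
  rw [mul_div_assoc', div_mul_eq_mul_div, div_eq_div_iff (by positivity) (by positivity)]
  rw [show (N : ℝ) ^ k = (N : ℝ) ^ m * (N : ℝ) ^ (k - m) from by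
    rw [← pow_add]; congr 1; omega]
  linear_combination ((N : ℝ) ^ m * (N : ℝ) ^ (k - m)) * hcast


lemma coeffSeq_comp (N : ℕ) (p : Polynomial ℝ) (hpd : p.natDegree = N) (c : ℝ)
    (k : ℕ) (hk : k ≤ N) :
    coeffSeq N (p.comp (X - C c)) k
      = ∑ j ∈ Finset.range (k + 1),
          (((N - j).choose (k - j) : ℝ) * c ^ (k - j)) * coeffSeq N p j := by
  have hXc : (X - C c : Polynomial ℝ) = X + C (-c) := by
    rw [map_neg, sub_eq_add_neg]
  have hcomp : (p.comp (X - C c)).coeff (N - k)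
      = ∑ i ∈ Finset.range (N + 1),
          p.coeff i * ((-c) ^ (i - (N - k)) * ((i.choose (N - k)) : ℝ)) := by
    rw [Polynomial.comp_eq_sum_left, Polynomial.sum_over_range' _
      (fun n => by simp) (N + 1) (by omega)]
    rw [Polynomial.finset_sum_coeff]
    refine Finset.sum_congr rfl fun i _ => ?_
    rw [Polynomial.coeff_C_mul, hXc, Polynomial.coeff_X_add_C_pow]
  rw [coeffSeq, hcomp]
  rw [← Finset.sum_range_reflect]
  simp only [Nat.add_sub_cancel]
  rw [← Finset.sum_subset (Finset.range_subset_range.2 (show k + 1 ≤ N + 1 by omega))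
    (fun j hjN hjk => ?_)]
  swap
  · rw [Finset.mem_range] at hjN hjk
    push_neg at hjk
    have : (N - j).choose (N - k) = 0 := Nat.choose_eq_zero_of_lt (by omega)
    rw [this, Nat.cast_zero, mul_zero, mul_zero]
  rw [Finset.mul_sum]
  refine Finset.sum_congr rfl fun j hj => ?_
  rw [Finset.mem_range, Nat.lt_succ_iff] at hj
  have hch : (N - j).choose (N - k) = (N - j).choose (k - j) := by
    rw [show N - k = (N - j) - (k - j) from by omega]
    exact Nat.choose_symm (by omega)
  have hexp : (N - j) - (N - k) = k - j := by omega
  rw [coeffSeq, hch, hexp]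
  have hsq : ((-1 : ℝ)) ^ (k - j) * (-1 : ℝ) ^ (k - j) = 1 := by
    rw [← pow_add]
    exact Even.neg_one_pow ⟨k - j, rfl⟩
  have hks : ((-1 : ℝ)) ^ k = (-1 : ℝ) ^ j * (-1 : ℝ) ^ (k - j) := by
    rw [← pow_add]; congr 1; omega
  rw [neg_pow c (k - j), hks]
  calc ((-1 : ℝ) ^ j * (-1 : ℝ) ^ (k - j)) *
        (p.coeff (N - j) * ((-1 : ℝ) ^ (k - j) * c ^ (k - j) * ((N - j).choose (k - j) : ℝ)))
      = ((-1 : ℝ) ^ (k - j) * (-1 : ℝ) ^ (k - j)) *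
        (((N - j).choose (k - j) : ℝ) * c ^ (k - j) * ((-1 : ℝ) ^ j * p.coeff (N - j))) := by
        ring
    _ = ((N - j).choose (k - j) : ℝ) * c ^ (k - j) * ((-1 : ℝ) ^ j * p.coeff (N - j)) := by
        rw [hsq, one_mul]
/-- translating roots by `c` adds `c` to the first finite free cumulant
and leaves all higher cumulants unchanged. -/
theorem cumulants_translate (N : ℕ) (hN : 1 ≤ N) (p : Polynomial ℝ) (c : ℝ)
    (hp : p.Monic) (hpd : p.natDegree = N)
    (κ κc : ℕ → ℝ)
    (hκ : cumulantRel N (coeffSeq N p) κ)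
    (hκc : cumulantRel N (coeffSeq N (p.comp (X - C c))) κc) :
    κc 1 = κ 1 + c ∧ ∀ j, 2 ≤ j → j ≤ N → κc j = κ j := by
  classical
  have hNR : (N : ℝ) ≠ 0 := Nat.cast_ne_zero.2 (by omega)
  set κ' : ℕ → ℝ := fun n => if n = 1 then κ 1 + c else κ n with hκ'def
  have hkerκ' : hker N κ' = fun n => hker N κ n + ((N : ℝ) * c) * (if n = 1 then 1 else 0) := by
    funext n
    simp only [hker, hκ'def]
    by_cases h : n = 1
    · subst h
      simp [Nat.factorial]
      ring
    · simp [h]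
  set D : ℕ → ℝ := fun k => (Nat.descFactorial N k : ℝ) / ((N : ℝ) ^ k * (Nat.factorial k : ℝ))
    with hD
  have hrel : ∀ k, 1 ≤ k → k ≤ N →
      coeffSeq N p k = D k * PS (hker N κ) (univ : Finset (Fin k)) := by
    intro k h1 h2
    rw [hκ k h1 h2, partition_sum_eq]
  have hDne : ∀ k, k ≤ N → D k ≠ 0 := by
    intro k hkN
    rw [hD]
    have h1 : N.descFactorial k ≠ 0 := by
      intro h
      rw [Nat.descFactorial_eq_zero_iff_lt] at h
      omega
    have h2 : (N.descFactorial k : ℝ) ≠ 0 := Nat.cast_ne_zero.2 h1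
    have h3 : (Nat.factorial k : ℝ) ≠ 0 := Nat.cast_ne_zero.2 (Nat.factorial_ne_zero k)
    positivity
  have hstep1 : ∀ k, 1 ≤ k → k ≤ N →
      coeffSeq N (p.comp (X - C c)) k = D k * PS (hker N κ') (univ : Finset (Fin k)) := by
    intro k hk1 hkN
    rw [coeffSeq_comp N p hpd c k hkN, hkerκ', PS_shift, Finset.mul_sum,
      ← Finset.sum_range_reflect]
    simp only [Nat.add_sub_cancel]
    refine Finset.sum_congr rfl fun m hm => ?_
    rw [Finset.mem_range, Nat.lt_succ_iff] at hm
    have hj : k - m ≤ N := le_trans (Nat.sub_le _ _) hkN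
    have ha : coeffSeq N p (k - m) = D (k - m) * PS (hker N κ) (univ : Finset (Fin (k - m))) := by
      rcases Nat.eq_zero_or_pos (k - m) with h0 | hpos
      · rw [h0, PS_nil]
        have hc0 : coeffSeq N p 0 = 1 := by
          rw [coeffSeq, pow_zero, one_mul, Nat.sub_zero, ← hpd]
          exact hp.coeff_natDegree
        rw [hc0, hD]
        simp
      · exact hrel _ hpos hj
    rw [ha, show k - (k - m) = m from by omega, mul_pow]
    linear_combination (c ^ m * PS (hker N κ) (univ : Finset (Fin (k - m)))) *
      D_key N k m hm hkN hN
  have hagree : ∀ n, 1 ≤ n → n ≤ N → κc n = κ' n := by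
    intro n
    induction n using Nat.strong_induction_on with
    | _ n IH =>
      intro hn1 hnN
      have e1 := hκc n hn1 hnN
      rw [partition_sum_eq] at e1
      have e2 := hstep1 n hn1 hnN
      have eP : PS (hker N κc) (univ : Finset (Fin n)) = PS (hker N κ') (univ : Finset (Fin n)) := by
        exact mul_left_cancel₀ (hDne n hnN) (e1.symm.trans e2)
      have hag : ∀ j, 1 ≤ j → j < n → hker N κc j = hker N κ' j := by
        intro j hj1 hjn
        rw [hker, hker, IH j hjn hj1 (by omega)]
      have hdet := PS_determine n hn1 _ _ hag
      rw [eP, sub_self] at hdet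
      have heq : hker N κc n = hker N κ' n := by linarith
      simp only [hker] at heq
      have hcoef : ((-1 : ℝ)) ^ (n - 1) * (N : ℝ) * (Nat.factorial (n - 1) : ℝ) ≠ 0 := by
        have h1 : ((-1 : ℝ)) ^ (n - 1) ≠ 0 := pow_ne_zero _ (by norm_num)
        have h3 : (Nat.factorial (n - 1) : ℝ) ≠ 0 := Nat.cast_ne_zero.2 (Nat.factorial_ne_zero _)
        exact mul_ne_zero (mul_ne_zero h1 hNR) h3
      exact mul_left_cancel₀ hcoef heq
  constructor
  · have h := hagree 1 le_rfl hN
    rw [h, hκ'def]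
    simp
  · intro j hj2 hjN
    have h := hagree j (by omega) hjN
    rw [h, hκ'def]
    simp [show j ≠ 1 from by omega]
end
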